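/- arXiv:1805.00653 — 3 statements merged into one kernel-verified Lean document; each statement's English description precedes it below -/
import Mathlib

section
/- Let λ > 0 and let a ∈ ℝ. Then ∫₀^∞ r^{-2} e^{-λr} (1 - cos(ar)) dr = a·arctan(a/λ) - (λ/2)·ln(λ² + a²) + λ·ln λ. -/
open Real MeasureTheory

open Set Filter Topology

open Real MeasureTheory Set Filter Topology

lemma hmul' (c r : ℝ) : HasDerivAt (fun x : ℝ => c * x) c r := by
  simpa using (hasDerivAt_id r).const_mul c

lemma hexp' (lam r : ℝ) :
    HasDerivAt (fun r => Real.exp (-lam * r)) (-lam * Real.exp (-lam * r)) r := by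
  have := (Real.hasDerivAt_exp (-lam * r)).comp r (hmul' (-lam) r)
  simpa [Function.comp_def, mul_comm] using this

lemma hsin' (a r : ℝ) :
    HasDerivAt (fun r => Real.sin (a * r)) (Real.cos (a * r) * a) r := by
  have := (Real.hasDerivAt_sin (a * r)).comp r (hmul' a r)
  simpa [Function.comp_def] using this

lemma hcos' (a r : ℝ) :
    HasDerivAt (fun r => Real.cos (a * r)) (-Real.sin (a * r) * a) r := by
  have := (Real.hasDerivAt_cos (a * r)).comp r (hmul' a r)
  simpa [Function.comp_def] using this

lemma expInt {lam : ℝ} (hlam : 0 < lam) :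
    IntegrableOn (fun r : ℝ => Real.exp (-lam * r)) (Set.Ioi 0) :=
  exp_neg_integrableOn_Ioi 0 hlam

lemma exp_tend (lam : ℝ) (hlam : 0 < lam) :
    Tendsto (fun r : ℝ => Real.exp (-lam * r)) atTop (𝓝 0) := by
  have h1 : Tendsto (fun r : ℝ => lam * r) atTop atTop :=
    Tendsto.const_mul_atTop hlam tendsto_id
  have := (Real.tendsto_exp_neg_atTop_nhds_zero).comp h1
  simpa [Function.comp_def, neg_mul] using this

lemma laplace_cos {lam : ℝ} (hlam : 0 < lam) (a : ℝ) :
    ∫ r in Set.Ioi (0:ℝ), Real.exp (-lam * r) * Real.cos (a * r)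
      = lam / (lam ^ 2 + a ^ 2) := by
  have hD : 0 < lam ^ 2 + a ^ 2 := by positivity
  set f : ℝ → ℝ := fun r =>
    Real.exp (-lam * r) * (a * Real.sin (a * r) - lam * Real.cos (a * r)) / (lam ^ 2 + a ^ 2)
    with hf
  have hderiv : ∀ r ∈ Set.Ici (0:ℝ),
      HasDerivAt f (Real.exp (-lam * r) * Real.cos (a * r)) r := by
    intro r _
    have h1 : HasDerivAt
        (fun r => Real.exp (-lam * r) * (a * Real.sin (a * r) - lam * Real.cos (a * r)))
        ((-lam * Real.exp (-lam * r)) * (a * Real.sin (a * r) - lam * Real.cos (a * r))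
          + Real.exp (-lam * r) * (a * (Real.cos (a * r) * a) - lam * (-Real.sin (a * r) * a))) r :=
      (hexp' lam r).mul (((hsin' a r).const_mul a).sub ((hcos' a r).const_mul lam))
    have h2 := h1.div_const (lam ^ 2 + a ^ 2)
    refine h2.congr_deriv ?_
    field_simp
    ring
  have htend : Tendsto f atTop (𝓝 0) := by
    apply squeeze_zero_norm
      (a := fun r => (|a| + lam) / (lam ^ 2 + a ^ 2) * Real.exp (-lam * r))
    · intro r
      rw [hf]
      have hs := Real.abs_sin_le_one (a * r)
      have hc := Real.abs_cos_le_one (a * r)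
      have h1 : |a * Real.sin (a * r) - lam * Real.cos (a * r)| ≤ |a| + lam := by
        have h2 := (abs_sub _ _ : |a * Real.sin (a * r) - lam * Real.cos (a * r)|
            ≤ |a * Real.sin (a * r)| + |lam * Real.cos (a * r)|)
        rw [abs_mul, abs_mul] at h2
        nlinarith [abs_nonneg a, abs_nonneg (Real.sin (a*r)), abs_nonneg (Real.cos (a*r)),
          abs_of_pos hlam]
      have hE := (Real.exp_pos (-lam * r)).le
      rw [Real.norm_eq_abs, abs_div, abs_mul, Real.abs_exp, abs_of_pos hD]
      calc Real.exp (-lam * r) * |a * Real.sin (a * r) - lam * Real.cos (a * r)|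
            / (lam ^ 2 + a ^ 2)
          ≤ Real.exp (-lam * r) * (|a| + lam) / (lam ^ 2 + a ^ 2) := by gcongr
        _ = (|a| + lam) / (lam ^ 2 + a ^ 2) * Real.exp (-lam * r) := by ring
    · have := (exp_tend lam hlam).const_mul ((|a| + lam) / (lam ^ 2 + a ^ 2))
      simpa using this
  have hint : IntegrableOn (fun r => Real.exp (-lam * r) * Real.cos (a * r)) (Set.Ioi 0) := by
    apply (expInt hlam).mono'
    · exact (Continuous.aestronglyMeasurable (by fun_prop))
    · filter_upwards with r
      rw [Real.norm_eq_abs, abs_mul, Real.abs_exp]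
      nlinarith [Real.abs_cos_le_one (a * r), (Real.exp_pos (-lam * r)).le,
        abs_nonneg (Real.cos (a * r))]
  have hval := integral_Ioi_of_hasDerivAt_of_tendsto' hderiv hint htend
  rw [hval, hf]
  simp
  field_simp

lemma arctan_hasDeriv {lam : ℝ} (hlam : 0 < lam) (a : ℝ) :
    HasDerivAt (fun x : ℝ => Real.arctan (x / lam)) (lam / (lam ^ 2 + a ^ 2)) a := by
  have h1 := (Real.hasDerivAt_arctan (a / lam)).comp a ((hasDerivAt_id a).div_const lam)
  have h2 : HasDerivAt (fun x : ℝ => Real.arctan (x / lam))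
      (1 / (1 + (a / lam) ^ 2) * (1 / lam)) a := by
    simpa [Function.comp_def] using h1
  convert h2 using 1
  have hD : 0 < lam ^ 2 + a ^ 2 := by positivity
  field_simp

lemma abs_one_sub_cos_le (t : ℝ) : |1 - Real.cos t| ≤ t ^ 2 / 2 := by
  have h1 : Real.cos t = 1 - 2 * Real.sin (t / 2) ^ 2 := by
    have h2 := Real.cos_two_mul (t / 2)
    have h3 := Real.sin_sq_add_cos_sq (t / 2)
    rw [(by ring : 2 * (t / 2) = t)] at h2
    nlinarith
  have h4 := Real.sin_sq_le_sq (x := t / 2)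
  have h5 : (0:ℝ) ≤ Real.sin (t / 2) ^ 2 := sq_nonneg _
  rw [h1, abs_of_nonneg (by nlinarith)]
  nlinarith

lemma laplace_sin_div {lam : ℝ} (hlam : 0 < lam) (a : ℝ) :
    ∫ r in Set.Ioi (0:ℝ), Real.exp (-lam * r) * Real.sin (a * r) / r
      = Real.arctan (a / lam) := by
  set H : ℝ → ℝ := fun x => ∫ r in Set.Ioi (0:ℝ), Real.exp (-lam * r) * Real.sin (x * r) / r
    with hH
  have key : ∀ x : ℝ, HasDerivAt H (lam / (lam ^ 2 + x ^ 2)) x := by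
    intro x
    have main := hasDerivAt_integral_of_dominated_loc_of_deriv_le
      (μ := volume.restrict (Set.Ioi 0))
      (F := fun x r => Real.exp (-lam * r) * Real.sin (x * r) / r)
      (F' := fun x r => Real.exp (-lam * r) * Real.cos (x * r))
      (bound := fun r => Real.exp (-lam * r)) (x₀ := x) (Metric.ball_mem_nhds x one_pos)
      (Filter.Eventually.of_forall fun y =>
        ((by fun_prop : Measurable fun r : ℝ =>
          Real.exp (-lam * r) * Real.sin (y * r) / r).aestronglyMeasurable))
      ?_ ((by fun_prop : Measurable fun r : ℝ =>
          Real.exp (-lam * r) * Real.cos (x * r)).aestronglyMeasurable)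
      ?_ (expInt hlam) ?_
    · have h2 := main.2
      rwa [laplace_cos hlam x] at h2
    · -- integrability of F x
      apply ((expInt hlam).const_mul |x|).mono'
        ((by fun_prop : Measurable fun r : ℝ =>
          Real.exp (-lam * r) * Real.sin (x * r) / r).aestronglyMeasurable)
      rw [ae_restrict_iff' measurableSet_Ioi]
      filter_upwards with r hr
      have hr0 : 0 < r := hr
      have hs : |Real.sin (x * r)| ≤ |x| * r := by
        have := Real.abs_sin_le_abs (x := x * r)
        rwa [abs_mul, abs_of_pos hr0] at this
      show |Real.exp (-lam * r) * Real.sin (x * r) / r| ≤ |x| * Real.exp (-lam * r)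
      rw [abs_div, abs_mul, Real.abs_exp, abs_of_pos hr0, div_le_iff₀ hr0]
      have hE := (Real.exp_pos (-lam * r)).le
      calc Real.exp (-lam * r) * |Real.sin (x * r)|
          ≤ Real.exp (-lam * r) * (|x| * r) := by gcongr
        _ = |x| * Real.exp (-lam * r) * r := by ring
    · -- bound for F'
      filter_upwards with r
      intro y _
      rw [Real.norm_eq_abs, abs_mul, Real.abs_exp]
      nlinarith [Real.abs_cos_le_one (y * r), (Real.exp_pos (-lam * r)).le,
        abs_nonneg (Real.cos (y * r))]
    · -- differentiability
      rw [ae_restrict_iff' measurableSet_Ioi]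
      filter_upwards with r hr
      intro y _
      have hr0 : (0:ℝ) < r := hr
      have h1 : HasDerivAt (fun y : ℝ => Real.sin (y * r)) (Real.cos (y * r) * r) y := by
        simpa [Function.comp_def] using
          (Real.hasDerivAt_sin (y * r)).comp y (hasDerivAt_mul_const r)
      have h2 := ((h1.const_mul (Real.exp (-lam * r))).div_const r)
      refine h2.congr_deriv ?_
      field_simp
  have h0 : H 0 = 0 := by simp [hH]
  have hdiff : Differentiable ℝ fun x => H x - Real.arctan (x / lam) :=
    fun x => ((key x).sub (arctan_hasDeriv hlam x)).differentiableAt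
  have hzero : ∀ x, deriv (fun x => H x - Real.arctan (x / lam)) x = 0 := by
    intro x
    have := ((key x).sub (arctan_hasDeriv hlam x)).deriv
    exact this.trans (sub_self _)
  have hc := is_const_of_deriv_eq_zero hdiff hzero a 0
  simp only [h0, Real.arctan_zero, zero_div, sub_zero] at hc
  have : H a = Real.arctan (a / lam) := by linarith [hc]
  exact this
/-- The Fourier-symbol integral of the tempered fractional Laplacian at `β = 1`:
`∫₀^∞ r⁻² e^{-λr}(1 - cos(ar)) dr = a arctan(a/λ) - (λ/2) log(λ²+a²) + λ log λ`. -/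
theorem stmt_3 (lam a : ℝ) (hlam : 0 < lam) :
    ∫ r in Set.Ioi (0:ℝ), Real.exp (-lam * r) * (1 - Real.cos (a * r)) / r ^ 2
      = a * Real.arctan (a / lam) - (lam / 2) * Real.log (lam ^ 2 + a ^ 2)
        + lam * Real.log lam := by
  have hD : ∀ x : ℝ, (0:ℝ) < lam ^ 2 + x ^ 2 := fun x => by positivity
  set G : ℝ → ℝ := fun x =>
    ∫ r in Set.Ioi (0:ℝ), Real.exp (-lam * r) * (1 - Real.cos (x * r)) / r ^ 2 with hG
  set R : ℝ → ℝ := fun x =>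
    x * Real.arctan (x / lam) - (lam / 2) * Real.log (lam ^ 2 + x ^ 2)
      + lam * Real.log lam with hR
  have key : ∀ x : ℝ, HasDerivAt G (Real.arctan (x / lam)) x := by
    intro x
    have main := hasDerivAt_integral_of_dominated_loc_of_deriv_le
      (μ := volume.restrict (Set.Ioi 0))
      (F := fun x r => Real.exp (-lam * r) * (1 - Real.cos (x * r)) / r ^ 2)
      (F' := fun x r => Real.exp (-lam * r) * Real.sin (x * r) / r)
      (bound := fun r => (|x| + 1) * Real.exp (-lam * r)) (x₀ := x) (Metric.ball_mem_nhds x one_pos)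
      (Filter.Eventually.of_forall fun y =>
        ((by fun_prop : Measurable fun r : ℝ =>
          Real.exp (-lam * r) * (1 - Real.cos (y * r)) / r ^ 2).aestronglyMeasurable))
      ?_ ((by fun_prop : Measurable fun r : ℝ =>
          Real.exp (-lam * r) * Real.sin (x * r) / r).aestronglyMeasurable)
      ?_ ((expInt hlam).const_mul (|x| + 1)) ?_
    · have h2 := main.2
      rwa [laplace_sin_div hlam x] at h2
    · -- integrability of F x
      apply ((expInt hlam).const_mul (x ^ 2 / 2)).mono'
        ((by fun_prop : Measurable fun r : ℝ =>
          Real.exp (-lam * r) * (1 - Real.cos (x * r)) / r ^ 2).aestronglyMeasurable)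
      rw [ae_restrict_iff' measurableSet_Ioi]
      filter_upwards with r hr
      have hr0 : 0 < r := hr
      have hs : |1 - Real.cos (x * r)| ≤ x ^ 2 * r ^ 2 / 2 := by
        have := abs_one_sub_cos_le (x * r)
        rw [mul_pow] at this
        linarith
      show |Real.exp (-lam * r) * (1 - Real.cos (x * r)) / r ^ 2|
          ≤ x ^ 2 / 2 * Real.exp (-lam * r)
      rw [abs_div, abs_mul, Real.abs_exp, abs_of_pos (by positivity : (0:ℝ) < r ^ 2),
        div_le_iff₀ (by positivity : (0:ℝ) < r ^ 2)]
      have hE := (Real.exp_pos (-lam * r)).le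
      calc Real.exp (-lam * r) * |1 - Real.cos (x * r)|
          ≤ Real.exp (-lam * r) * (x ^ 2 * r ^ 2 / 2) := by gcongr
        _ = x ^ 2 / 2 * Real.exp (-lam * r) * r ^ 2 := by ring
    · -- bound for F'
      rw [ae_restrict_iff' measurableSet_Ioi]
      filter_upwards with r hr
      intro y hy
      have hr0 : (0:ℝ) < r := hr
      have hy1 : |y| ≤ |x| + 1 := by
        have := abs_sub_abs_le_abs_sub y x
        have h2 : |y - x| < 1 := by simpa [Real.dist_eq] using hy
        linarith
      have hs : |Real.sin (y * r)| ≤ |y| * r := by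
        have := Real.abs_sin_le_abs (x := y * r)
        rwa [abs_mul, abs_of_pos hr0] at this
      show |Real.exp (-lam * r) * Real.sin (y * r) / r| ≤ (|x| + 1) * Real.exp (-lam * r)
      rw [abs_div, abs_mul, Real.abs_exp, abs_of_pos hr0, div_le_iff₀ hr0]
      have hE := (Real.exp_pos (-lam * r)).le
      calc Real.exp (-lam * r) * |Real.sin (y * r)|
          ≤ Real.exp (-lam * r) * ((|x| + 1) * r) := by
            gcongr
            exact hs.trans (by nlinarith [abs_nonneg y])
        _ = (|x| + 1) * Real.exp (-lam * r) * r := by ring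
    · -- differentiability
      rw [ae_restrict_iff' measurableSet_Ioi]
      filter_upwards with r hr
      intro y _
      have hr0 : (0:ℝ) < r := hr
      have h1 : HasDerivAt (fun y : ℝ => Real.cos (y * r)) (-Real.sin (y * r) * r) y := by
        simpa [Function.comp_def] using
          (Real.hasDerivAt_cos (y * r)).comp y (hasDerivAt_mul_const r)
      have h2 := (((h1.const_sub 1).const_mul (Real.exp (-lam * r))).div_const (r ^ 2))
      refine h2.congr_deriv ?_
      field_simp
  have keyR : ∀ x : ℝ, HasDerivAt R (Real.arctan (x / lam)) x := by
    intro x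
    have h1 : HasDerivAt (fun x : ℝ => x * Real.arctan (x / lam))
        (1 * Real.arctan (x / lam) + x * (lam / (lam ^ 2 + x ^ 2))) x :=
      (hasDerivAt_id x).mul (arctan_hasDeriv hlam x)
    have h2 : HasDerivAt (fun x : ℝ => Real.log (lam ^ 2 + x ^ 2))
        ((lam ^ 2 + x ^ 2)⁻¹ * (0 + 2 * x ^ 1)) x := by
      have hin : HasDerivAt (fun x : ℝ => lam ^ 2 + x ^ 2) (0 + 2 * x ^ 1) x :=
        (hasDerivAt_const x (lam ^ 2)).add (hasDerivAt_pow 2 x)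
      simpa [Function.comp_def] using
        (Real.hasDerivAt_log (hD x).ne').comp x hin
    have h3 := (h1.sub (h2.const_mul (lam / 2))).add_const (lam * Real.log lam)
    refine h3.congr_deriv ?_
    have := (hD x).ne'
    field_simp
    ring
  have h0G : G 0 = 0 := by simp [hG]
  have h0R : R 0 = 0 := by
    have : Real.log (lam ^ 2) = 2 * Real.log lam := by
      rw [sq, Real.log_mul hlam.ne' hlam.ne']; ring
    simp [hR, this]
    ring
  have hdiff : Differentiable ℝ fun x => G x - R x :=
    fun x => ((key x).sub (keyR x)).differentiableAt
  have hzero : ∀ x, deriv (fun x => G x - R x) x = 0 := by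
    intro x
    have := ((key x).sub (keyR x)).deriv
    exact this.trans (sub_self _)
  have hc := is_const_of_deriv_eq_zero hdiff hzero a 0
  rw [h0G, h0R, sub_zero] at hc
  have : G a = R a := by linarith [hc]
  rw [hG] at this
  simpa [hR, neg_mul] using this
end

section
/- Let λ > 0 and β ∈ (1,2), and let a ∈ ℝ. Setting η = arctan(a/λ), one has ∫₀^∞ r^{-1-β} e^{-λr} (sin(ar) - ar) dr = -Γ(-β)(λ² + a²)^{β/2} sin(βη) - Γ(1-β) λ^{β-1} a. -/
open Real MeasureTheory Set Filter Complex

noncomputable section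

namespace Stmt5Aux

/-- real dominator integrability -/
lemma rexp_aux {s b : ℝ} (hs : -1 < s) (hb : 0 < b) :
    IntegrableOn (fun x : ℝ => x ^ s * Real.exp (-b * x)) (Set.Ioi 0) := by
  have h := integrableOn_rpow_mul_exp_neg_mul_rpow (p := 1) hs one_pos hb
  exact h.congr_fun (fun x _ => by simp only [Real.rpow_one]) measurableSet_Ioi

lemma contOn_rpow (p : ℝ) : ContinuousOn (fun t : ℝ => t ^ p) (Set.Ioi 0) :=
  fun x hx => (Real.continuousAt_rpow_const x p (Or.inl (ne_of_gt hx))).continuousWithinAt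

lemma meas_aux (p : ℝ) (g : ℝ → ℂ) (hg : Continuous g) :
    AEStronglyMeasurable (fun t : ℝ => ((t ^ p : ℝ) : ℂ) * g t)
      (volume.restrict (Set.Ioi 0)) := by
  refine ContinuousOn.aestronglyMeasurable ?_ measurableSet_Ioi
  exact (Complex.continuous_ofReal.comp_continuousOn (contOn_rpow p)).mul hg.continuousOn

lemma exp_cont (z : ℂ) : Continuous (fun t : ℝ => Complex.exp (-z * t)) := by
  continuity

/-- I1 : t^p e^{-zt} integrable for p > -1, re z > 0 -/
lemma I1 {p : ℝ} (hp : -1 < p) {z : ℂ} (hz : 0 < z.re) :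
    IntegrableOn (fun t : ℝ => ((t ^ p : ℝ) : ℂ) * Complex.exp (-z * t)) (Set.Ioi 0) := by
  refine (rexp_aux hp hz).mono' (meas_aux p _ (exp_cont z)) ?_
  refine (ae_restrict_iff' measurableSet_Ioi).2 (Filter.Eventually.of_forall fun t ht => ?_)
  have ht : (0:ℝ) < t := ht
  rw [norm_mul, Complex.norm_real, Real.norm_eq_abs, Complex.norm_exp]
  have : (-z * t).re = -z.re * t := by simp [Complex.mul_re]
  rw [this, _root_.abs_of_nonneg (Real.rpow_nonneg ht.le p)]

end Stmt5Aux

namespace Stmt5Aux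

lemma norm_one_sub_exp_le_two {z : ℂ} (hz : 0 < z.re) {t : ℝ} (ht : 0 < t) :
    ‖1 - Complex.exp (-z * t)‖ ≤ 2 := by
  have h1 : ‖Complex.exp (-z * t)‖ ≤ 1 := by
    rw [Complex.norm_exp]
    have : (-z * t).re = -z.re * t := by simp [Complex.mul_re]
    rw [this]
    exact Real.exp_le_one_iff.2 (by nlinarith)
  calc ‖1 - Complex.exp (-z * t)‖ ≤ ‖(1:ℂ)‖ + ‖Complex.exp (-z * t)‖ := norm_sub_le _ _
  _ ≤ 2 := by rw [norm_one]; linarith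

lemma abs_neg_z_t (z : ℂ) {t : ℝ} (ht : 0 ≤ t) : ‖-z * t‖ = ‖z‖ * t := by
  rw [norm_mul, norm_neg, Complex.norm_real, Real.norm_eq_abs, _root_.abs_of_nonneg ht]

/-- I2 : t^{-β}(1 - e^{-zt}) integrable -/
lemma I2 {beta : ℝ} (hβ1 : 1 < beta) (hβ2 : beta < 2) {z : ℂ} (hz : 0 < z.re) :
    IntegrableOn (fun t : ℝ => ((t ^ (-beta) : ℝ) : ℂ) * (1 - Complex.exp (-z * t)))
      (Set.Ioi 0) := by
  set δ : ℝ := min 1 (1 / (‖z‖ + 1)) with hδdef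
  have habs : (0:ℝ) ≤ ‖z‖ := norm_nonneg z
  have hδ : 0 < δ := lt_min one_pos (by positivity)
  have hmeas := meas_aux (-beta) (fun t => 1 - Complex.exp (-z * t)) (continuous_const.sub (exp_cont z))
  rw [← Set.Ioc_union_Ioi_eq_Ioi hδ.le]
  refine IntegrableOn.union ?_ ?_
  · -- near 0
    have hdom : IntegrableOn (fun t : ℝ => 2 * ‖z‖ * t ^ (1 - beta)) (Set.Ioc 0 δ) := by
      have := (intervalIntegral.intervalIntegrable_rpow' (a := 0) (b := δ)
        (r := 1 - beta) (by linarith)).1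
      exact this.const_mul _
    refine hdom.mono' (hmeas.mono_measure
      (Measure.restrict_mono Set.Ioc_subset_Ioi_self le_rfl)) ?_
    refine (ae_restrict_iff' measurableSet_Ioc).2 (Filter.Eventually.of_forall fun t ht => ?_)
    obtain ⟨ht0, htδ⟩ := ht
    have hzt : ‖-z * t‖ ≤ 1 := by
      rw [abs_neg_z_t z ht0.le]
      have h1 : ‖z‖ * t ≤ ‖z‖ * (1 / (‖z‖ + 1)) := by
        apply mul_le_mul_of_nonneg_left (htδ.trans (min_le_right _ _)) habs
      have h2 : ‖z‖ * (1 / (‖z‖ + 1)) ≤ 1 := by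
        rw [mul_one_div, div_le_one (by positivity)]; linarith
      linarith
    rw [norm_mul, Complex.norm_real, Real.norm_eq_abs,
      _root_.abs_of_nonneg (Real.rpow_nonneg ht0.le _), norm_sub_rev]
    have hb : ‖Complex.exp (-z * t) - 1‖ ≤ 2 * (‖z‖ * t) := by
      rw [← abs_neg_z_t z ht0.le]
      exact Complex.norm_exp_sub_one_le hzt
    calc t ^ (-beta) * ‖Complex.exp (-z * ↑t) - 1‖
        ≤ t ^ (-beta) * (2 * (‖z‖ * t)) := by
          exact mul_le_mul_of_nonneg_left hb (Real.rpow_nonneg ht0.le _)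
      _ = 2 * ‖z‖ * t ^ (1 - beta) := by
          rw [show (1 - beta) = -beta + 1 by ring, Real.rpow_add ht0, Real.rpow_one]; ring
  · -- away from 0
    have hdom : IntegrableOn (fun t : ℝ => 2 * t ^ (-beta)) (Set.Ioi δ) :=
      (integrableOn_Ioi_rpow_of_lt (by linarith) hδ).const_mul 2
    refine hdom.mono' (hmeas.mono_measure
      (Measure.restrict_mono (Set.Ioi_subset_Ioi hδ.le) le_rfl)) ?_
    refine (ae_restrict_iff' measurableSet_Ioi).2 (Filter.Eventually.of_forall fun t ht => ?_)
    have ht0 : (0:ℝ) < t := hδ.trans ht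
    rw [norm_mul, Complex.norm_real, Real.norm_eq_abs,
      _root_.abs_of_nonneg (Real.rpow_nonneg ht0.le _)]
    calc t ^ (-beta) * ‖1 - Complex.exp (-z * ↑t)‖
        ≤ t ^ (-beta) * 2 := mul_le_mul_of_nonneg_left
          (norm_one_sub_exp_le_two hz ht0) (Real.rpow_nonneg ht0.le _)
      _ = 2 * t ^ (-beta) := by ring

end Stmt5Aux

namespace Stmt5Aux

/-- I3 : t^{-1-β}(e^{-zt} - 1 + zt) integrable -/
lemma I3 {beta : ℝ} (hβ1 : 1 < beta) (hβ2 : beta < 2) {z : ℂ} (hz : 0 < z.re) :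
    IntegrableOn
      (fun t : ℝ => ((t ^ (-1 - beta) : ℝ) : ℂ) * (Complex.exp (-z * t) - 1 + z * t))
      (Set.Ioi 0) := by
  set δ : ℝ := min 1 (1 / (‖z‖ + 1)) with hδdef
  have habs : (0:ℝ) ≤ ‖z‖ := norm_nonneg z
  have hδ : 0 < δ := lt_min one_pos (by positivity)
  have hmeas := meas_aux (-1 - beta) (fun t : ℝ => Complex.exp (-z * t) - 1 + z * t)
    (((exp_cont z).sub continuous_const).add (by continuity))
  rw [← Set.Ioc_union_Ioi_eq_Ioi hδ.le]
  refine IntegrableOn.union ?_ ?_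
  · have hdom : IntegrableOn (fun t : ℝ => ‖z‖ ^ 2 * t ^ (1 - beta)) (Set.Ioc 0 δ) := by
      have := (intervalIntegral.intervalIntegrable_rpow' (a := 0) (b := δ)
        (r := 1 - beta) (by linarith)).1
      exact this.const_mul _
    refine hdom.mono' (hmeas.mono_measure
      (Measure.restrict_mono Set.Ioc_subset_Ioi_self le_rfl)) ?_
    refine (ae_restrict_iff' measurableSet_Ioc).2 (Filter.Eventually.of_forall fun t ht => ?_)
    obtain ⟨ht0, htδ⟩ := ht
    have hzt : ‖-z * t‖ ≤ 1 := by
      rw [abs_neg_z_t z ht0.le]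
      have h1 : ‖z‖ * t ≤ ‖z‖ * (1 / (‖z‖ + 1)) :=
        mul_le_mul_of_nonneg_left (htδ.trans (min_le_right _ _)) habs
      have h2 : ‖z‖ * (1 / (‖z‖ + 1)) ≤ 1 := by
        rw [mul_one_div, div_le_one (by positivity)]; linarith
      linarith
    rw [norm_mul, Complex.norm_real, Real.norm_eq_abs,
      _root_.abs_of_nonneg (Real.rpow_nonneg ht0.le _)]
    have hb : ‖Complex.exp (-z * t) - 1 + z * t‖ ≤ (‖z‖ * t) ^ 2 := by
      have h3 : (Complex.exp (-z * ↑t) - 1 + z * ↑t)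
          = Complex.exp (-z * ↑t) - 1 - (-z * ↑t) := by ring
      rw [h3, ← abs_neg_z_t z ht0.le]
      exact Complex.norm_exp_sub_one_sub_id_le hzt
    calc t ^ (-1 - beta) * ‖Complex.exp (-z * ↑t) - 1 + z * ↑t‖
        ≤ t ^ (-1 - beta) * (‖z‖ * t) ^ 2 :=
          mul_le_mul_of_nonneg_left hb (Real.rpow_nonneg ht0.le _)
      _ = ‖z‖ ^ 2 * t ^ (1 - beta) := by
          rw [show (1 - beta) = (-1 - beta) + 2 by ring, Real.rpow_add ht0,
            Real.rpow_two]; ring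
  · have hdom : IntegrableOn
        (fun t : ℝ => 2 * t ^ (-1 - beta) + ‖z‖ * t ^ (-beta)) (Set.Ioi δ) :=
      ((integrableOn_Ioi_rpow_of_lt (by linarith) hδ).const_mul 2).add
        ((integrableOn_Ioi_rpow_of_lt (by linarith) hδ).const_mul _)
    refine hdom.mono' (hmeas.mono_measure
      (Measure.restrict_mono (Set.Ioi_subset_Ioi hδ.le) le_rfl)) ?_
    refine (ae_restrict_iff' measurableSet_Ioi).2 (Filter.Eventually.of_forall fun t ht => ?_)
    have ht0 : (0:ℝ) < t := hδ.trans ht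
    rw [norm_mul, Complex.norm_real, Real.norm_eq_abs,
      _root_.abs_of_nonneg (Real.rpow_nonneg ht0.le _)]
    have hb : ‖Complex.exp (-z * t) - 1 + z * t‖ ≤ 2 + ‖z‖ * t := by
      calc ‖Complex.exp (-z * t) - 1 + z * t‖
          ≤ ‖Complex.exp (-z * t) - 1‖ + ‖z * (t:ℂ)‖ := norm_add_le _ _
        _ ≤ 2 + ‖z‖ * t := by
            refine add_le_add ?_ ?_
            · rw [← norm_sub_rev]; exact norm_one_sub_exp_le_two hz ht0
            · rw [norm_mul, Complex.norm_real, Real.norm_eq_abs,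
                _root_.abs_of_nonneg ht0.le]
    calc t ^ (-1 - beta) * ‖Complex.exp (-z * ↑t) - 1 + z * ↑t‖
        ≤ t ^ (-1 - beta) * (2 + ‖z‖ * t) :=
          mul_le_mul_of_nonneg_left hb (Real.rpow_nonneg ht0.le _)
      _ = 2 * t ^ (-1 - beta) + ‖z‖ * t ^ (-beta) := by
          rw [show (-beta) = (-1 - beta) + 1 by ring, Real.rpow_add ht0, Real.rpow_one]; ring

end Stmt5Aux

namespace Stmt5Aux

lemma base_real {s : ℝ} (hs : 0 < s) {r : ℝ} (hr : 0 < r) :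
    ∫ t in Set.Ioi (0:ℝ), ((t ^ (s - 1) : ℝ) : ℂ) * Complex.exp (-(r:ℂ) * t)
      = Complex.Gamma s * (r:ℂ) ^ (-(s:ℂ)) := by
  have h := Complex.integral_cpow_mul_exp_neg_mul_Ioi (a := (s:ℂ)) (by simpa) hr
  have heq : ∫ t in Set.Ioi (0:ℝ), ((t ^ (s - 1) : ℝ) : ℂ) * Complex.exp (-(r:ℂ) * t)
      = ∫ t in Set.Ioi (0:ℝ), (t:ℂ) ^ ((s:ℂ) - 1) * Complex.exp (-(↑r * ↑t)) := by
    refine setIntegral_congr_fun measurableSet_Ioi (fun t ht => ?_)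
    rw [Complex.ofReal_cpow (le_of_lt ht) (s-1), neg_mul]
    push_cast
    ring_nf
  rw [heq, h, Complex.cpow_neg, one_div, Complex.inv_cpow _ _ ?_]
  · ring
  · rw [Complex.arg_ofReal_of_nonneg hr.le]
    exact Ne.symm Real.pi_ne_zero

lemma base {s : ℝ} (hs : 0 < s) {z : ℂ} (hz : 0 < z.re) :
    ∫ t in Set.Ioi (0:ℝ), ((t ^ (s - 1) : ℝ) : ℂ) * Complex.exp (-z * t)
      = Complex.Gamma s * z ^ (-(s:ℂ)) := by
  set U : Set ℂ := {w : ℂ | 0 < w.re} with hU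
  set F : ℂ → ℂ :=
    fun w => ∫ t in Set.Ioi (0:ℝ), ((t ^ (s - 1) : ℝ) : ℂ) * Complex.exp (-w * t) with hF
  set G : ℂ → ℂ := fun w => Complex.Gamma s * w ^ (-(s:ℂ)) with hG
  have hUopen : IsOpen U := isOpen_lt continuous_const Complex.continuous_re
  have hdF : ∀ w ∈ U, DifferentiableAt ℂ F w := by
    intro w hw
    have hw' : 0 < w.re := hw
    have hε : 0 < w.re / 2 := by positivity
    have key := hasDerivAt_integral_of_dominated_loc_of_deriv_le
      (μ := volume.restrict (Set.Ioi 0))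
      (F := fun w (t:ℝ) => ((t ^ (s - 1) : ℝ) : ℂ) * Complex.exp (-w * t))
      (F' := fun w (t:ℝ) => ((t ^ (s - 1) : ℝ) : ℂ) * (Complex.exp (-w * t) * (-1 * t)))
      (x₀ := w) (bound := fun t => t ^ s * Real.exp (-(w.re / 2) * t)) (Metric.ball_mem_nhds w hε)
      (Filter.Eventually.of_forall (fun w' => meas_aux _ _ (exp_cont w')))
      (I1 (by linarith) hw')
      (meas_aux _ _ (by continuity))
      ?_ (rexp_aux (by linarith) hε) ?_
    · exact key.2.differentiableAt
    · refine (ae_restrict_iff' measurableSet_Ioi).2 (Filter.Eventually.of_forall fun t ht => ?_)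
      intro w' hw'mem
      have ht0 : (0:ℝ) < t := ht
      have hre : w.re / 2 < w'.re := by
        have hb : ‖w' - w‖ < w.re / 2 := by
          simpa [Metric.mem_ball, Complex.dist_eq] using hw'mem
        have h3 : |w'.re - w.re| ≤ ‖w' - w‖ := by
          simpa using Complex.abs_re_le_norm (w' - w)
        have h4 := abs_lt.mp (lt_of_le_of_lt h3 hb)
        linarith [h4.1]
      rw [norm_mul, norm_mul,
        Complex.norm_real, Real.norm_eq_abs, Complex.norm_exp, _root_.abs_of_nonneg (Real.rpow_nonneg ht0.le _)]
      have h1 : (-w' * t).re = -w'.re * t := by simp [Complex.mul_re]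
      have h2 : ‖-1 * (t:ℂ)‖ = t := by
        rw [norm_mul]; simp [_root_.abs_of_nonneg ht0.le]
      rw [h1, h2]
      calc t ^ (s-1) * (Real.exp (-w'.re * t) * t)
          = t ^ s * Real.exp (-w'.re * t) := by
            rw [show s = (s-1)+1 by ring, Real.rpow_add ht0, Real.rpow_one]; ring_nf
        _ ≤ t ^ s * Real.exp (-(w.re/2) * t) := by
            refine mul_le_mul_of_nonneg_left ?_ (Real.rpow_nonneg ht0.le _)
            exact Real.exp_le_exp.2 (by nlinarith)
    · refine (ae_restrict_iff' measurableSet_Ioi).2 (Filter.Eventually.of_forall fun t ht => ?_)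
      intro w' _
      have h0 : HasDerivAt (fun w'' : ℂ => -w'' * (t:ℂ)) (-1 * t) w' :=
        (hasDerivAt_id w').neg.mul_const _
      exact h0.cexp.const_mul _
  have hdG : ∀ w ∈ U, DifferentiableAt ℂ G w := by
    intro w hw
    exact (differentiableAt_id.cpow (differentiableAt_const _) (Or.inl hw)).const_mul _
  have hFan : AnalyticOnNhd ℂ F U :=
    DifferentiableOn.analyticOnNhd (fun w hw => (hdF w hw).differentiableWithinAt) hUopen
  have hGan : AnalyticOnNhd ℂ G U :=
    DifferentiableOn.analyticOnNhd (fun w hw => (hdG w hw).differentiableWithinAt) hUopen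
  have hconn : IsPreconnected U := (convex_halfSpace_re_gt 0).isPreconnected
  have h1U : (1:ℂ) ∈ U := by simp [hU]
  have hfreq : ∃ᶠ w in nhdsWithin (1:ℂ) {(1:ℂ)}ᶜ, F w = G w := by
    have hseq : Tendsto (fun n : ℕ => ((1 + 1/(n+1) : ℝ) : ℂ)) atTop
        (nhdsWithin 1 {(1:ℂ)}ᶜ) := by
      refine tendsto_nhdsWithin_of_tendsto_nhds_of_eventually_within _ ?_ ?_
      · have h5 : Tendsto (fun n : ℕ => (1 + 1/(n+1) : ℝ)) atTop (nhds 1) := by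
          simpa using (tendsto_const_nhds (x := (1:ℝ))).add tendsto_one_div_add_atTop_nhds_zero_nat
        have := (Complex.continuous_ofReal.tendsto 1).comp h5
        simpa [Function.comp_def] using this
      · refine Filter.Eventually.of_forall fun n => ?_
        simp only [Set.mem_compl_iff, Set.mem_singleton_iff]
        intro h
        rw [show (1:ℂ) = ((1:ℝ):ℂ) by norm_num] at h
        have h6 : (1 + 1/(n+1) : ℝ) = 1 := Complex.ofReal_injective h
        have : (0:ℝ) < 1/((n:ℝ)+1) := by positivity
        linarith
    refine hseq.frequently (Filter.Frequently.of_forall fun n => ?_)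
    have hr : (0:ℝ) < 1 + 1/(n+1) := by positivity
    exact base_real hs hr
  exact hFan.eqOn_of_preconnected_of_frequently_eq hGan hconn h1U hfreq hz

end Stmt5Aux

namespace Stmt5Aux

lemma div_le_div_aux {a b c : ℝ} (h : a ≤ b) (hc : 0 < c) : a / c ≤ b / c := by
  gcongr

lemma hasDerivAt_exp_neg (z : ℂ) (t : ℝ) :
    HasDerivAt (fun t : ℝ => Complex.exp (-z * t)) (Complex.exp (-z * t) * (-z * 1)) t := by
  have h0 : HasDerivAt (fun t : ℝ => -z * (t:ℂ)) (-z * 1) t :=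
    ((hasDerivAt_id t).ofReal_comp).const_mul (-z)
  exact h0.cexp

lemma hasDerivAt_rpow_ofReal {p t : ℝ} (ht : t ≠ 0) :
    HasDerivAt (fun t : ℝ => ((t ^ p : ℝ) : ℂ)) (((p * t ^ (p - 1) : ℝ) : ℂ)) t :=
  (Real.hasDerivAt_rpow_const (Or.inl ht)).ofReal_comp

/-- second IBP: ∫ t^{-β}(1-e^{-zt}) = z/(β-1) ∫ t^{1-β} e^{-zt} -/
lemma ibp2 {beta : ℝ} (hβ1 : 1 < beta) (hβ2 : beta < 2) {z : ℂ} (hz : 0 < z.re) :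
    ∫ t in Set.Ioi (0:ℝ), ((t ^ (-beta) : ℝ) : ℂ) * (1 - Complex.exp (-z * t))
      = z / ((beta:ℂ) - 1)
        * ∫ t in Set.Ioi (0:ℝ), ((t ^ (1 - beta) : ℝ) : ℂ) * Complex.exp (-z * t) := by
  set δ : ℝ := min 1 (1 / (‖z‖ + 1)) with hδdef
  have habs : (0:ℝ) ≤ ‖z‖ := norm_nonneg z
  have hδ : 0 < δ := lt_min one_pos (by positivity)
  have hβ1' : (beta:ℂ) ≠ 1 := by
    intro h; have := Complex.ofReal_injective (by exact_mod_cast h : (beta:ℂ) = ((1:ℝ):ℂ))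
    linarith
  set H : ℝ → ℂ :=
    fun t => ((t ^ (1 - beta) : ℝ) : ℂ) * (1 - Complex.exp (-z * t)) / (1 - beta) with hH
  set f' : ℝ → ℂ := fun t => ((t ^ (-beta) : ℝ) : ℂ) * (1 - Complex.exp (-z * t))
    + z / (1 - (beta:ℂ)) * (((t ^ (1 - beta) : ℝ) : ℂ) * Complex.exp (-z * t)) with hf'
  have hint1 : IntegrableOn (fun t : ℝ => ((t ^ (-beta) : ℝ) : ℂ) * (1 - Complex.exp (-z * t)))
      (Set.Ioi 0) := I2 hβ1 hβ2 hz
  have hint2 : IntegrableOn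
      (fun t : ℝ => z / (1 - (beta:ℂ)) * (((t ^ (1 - beta) : ℝ) : ℂ) * Complex.exp (-z * t)))
      (Set.Ioi 0) := (I1 (by linarith) hz).const_mul _
  have hderiv : ∀ t ∈ Set.Ioi (0:ℝ), HasDerivAt H (f' t) t := by
    intro t ht
    have ht0 : (0:ℝ) < t := ht
    have h1 := hasDerivAt_rpow_ofReal (p := 1 - beta) ht0.ne'
    have h2 : HasDerivAt (fun t : ℝ => 1 - Complex.exp (-z * t))
        (-(Complex.exp (-z * t) * (-z * 1))) t := (hasDerivAt_exp_neg z t).const_sub 1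
    have h3 := (h1.mul h2).div_const (1 - (beta:ℂ))
    convert h3 using 1
    · rfl
    · rfl
    have hne : (1:ℂ) - (beta:ℂ) ≠ 0 := by
      intro h; exact hβ1' (by linear_combination -h)
    rw [hf', show (1 - beta - 1 : ℝ) = -beta by ring]
    push_cast
    field_simp
  have hcont : ContinuousWithinAt H (Set.Ici 0) 0 := by
    have hH0 : H 0 = 0 := by simp [hH]
    rw [ContinuousWithinAt, hH0]
    refine squeeze_zero_norm'
      (a := fun t => 2 * ‖z‖ / (beta - 1) * t ^ (2 - beta)) ?_ ?_
    · filter_upwards [Ico_mem_nhdsGE_of_mem (by exact ⟨le_rfl, hδ⟩ :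
        (0:ℝ) ∈ Set.Ico 0 δ)] with t ht
      obtain ⟨ht0, htδ⟩ := ht
      rcases eq_or_lt_of_le ht0 with h | h
      · rw [← h]
        simp [hH, Real.zero_rpow (by intro hc; linarith : (2:ℝ) - beta ≠ 0),
          Real.zero_rpow (by intro hc; linarith : (1:ℝ) - beta ≠ 0)]
      · have hzt : ‖-z * t‖ ≤ 1 := by
          rw [abs_neg_z_t z h.le]
          have h1 : ‖z‖ * t ≤ ‖z‖ * (1 / (‖z‖ + 1)) :=
            mul_le_mul_of_nonneg_left (htδ.le.trans (min_le_right _ _)) habs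
          have h2 : ‖z‖ * (1 / (‖z‖ + 1)) ≤ 1 := by
            rw [mul_one_div, div_le_one (by positivity)]; linarith
          linarith
        have hb : ‖1 - Complex.exp (-z * t)‖ ≤ 2 * (‖z‖ * t) := by
          rw [norm_sub_rev, ← abs_neg_z_t z h.le]
          exact Complex.norm_exp_sub_one_le hzt
        have hnorm : ‖H t‖ = t ^ (1 - beta) * ‖1 - Complex.exp (-z * t)‖ / (beta - 1) := by
          rw [hH]
          simp only [norm_div, norm_mul, Complex.norm_real, Real.norm_eq_abs]
          rw [_root_.abs_of_nonneg (Real.rpow_nonneg h.le _),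
            show ((1:ℂ) - beta) = ((1 - beta : ℝ) : ℂ) by push_cast; ring,
            Complex.norm_real, Real.norm_eq_abs, abs_of_neg (by linarith : (1:ℝ) - beta < 0)]
          rw [show -(1 - beta) = beta - 1 by ring]
        rw [hnorm]
        have hstep : t ^ (1 - beta) * ‖1 - Complex.exp (-z * ↑t)‖ / (beta - 1)
            ≤ t ^ (1 - beta) * (2 * (‖z‖ * t)) / (beta - 1) :=
          div_le_div_aux (mul_le_mul_of_nonneg_left hb (Real.rpow_nonneg h.le _))
            (by linarith)
        refine hstep.trans_eq ?_
        rw [show (2 - beta : ℝ) = (1 - beta) + 1 by ring, Real.rpow_add h, Real.rpow_one]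
        ring
    · have hca : ContinuousAt (fun t : ℝ => t ^ (2 - beta)) 0 :=
        Real.continuousAt_rpow_const 0 _ (Or.inr (by linarith))
      have h7 : Tendsto (fun t : ℝ => t ^ (2 - beta)) (nhdsWithin 0 (Set.Ici 0)) (nhds 0) := by
        have := hca.tendsto.mono_left (nhdsWithin_le_nhds (s := Set.Ici 0))
        rwa [Real.zero_rpow (by intro hc; linarith : (2:ℝ) - beta ≠ 0)] at this
      simpa using h7.const_mul (2 * ‖z‖ / (beta - 1))
  have htop : Tendsto H atTop (nhds 0) := by
    refine squeeze_zero_norm' (a := fun t => 2 / (beta - 1) * t ^ (1 - beta)) ?_ ?_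
    · filter_upwards [eventually_ge_atTop (1:ℝ)] with t ht1
      have h : (0:ℝ) < t := lt_of_lt_of_le one_pos ht1
      have hb := norm_one_sub_exp_le_two hz h (z := z)
      have hnorm : ‖H t‖ = t ^ (1 - beta) * ‖1 - Complex.exp (-z * t)‖ / (beta - 1) := by
        rw [hH]
        simp only [norm_div, norm_mul, Complex.norm_real, Real.norm_eq_abs]
        rw [_root_.abs_of_nonneg (Real.rpow_nonneg h.le _),
          show ((1:ℂ) - beta) = ((1 - beta : ℝ) : ℂ) by push_cast; ring,
          Complex.norm_real, Real.norm_eq_abs, abs_of_neg (by linarith : (1:ℝ) - beta < 0)]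
        rw [show -(1 - beta) = beta - 1 by ring]
      rw [hnorm]
      calc t ^ (1 - beta) * ‖1 - Complex.exp (-z * ↑t)‖ / (beta - 1)
          ≤ t ^ (1 - beta) * 2 / (beta - 1) :=
            div_le_div_aux (mul_le_mul_of_nonneg_left hb (Real.rpow_nonneg h.le _))
              (by linarith)
        _ = 2 / (beta - 1) * t ^ (1 - beta) := by ring
    · have h8 : Tendsto (fun t : ℝ => t ^ (1 - beta)) atTop (nhds 0) := by
        have := tendsto_rpow_neg_atTop (by linarith : (0:ℝ) < beta - 1)
        simpa [show -(beta - 1) = 1 - beta by ring] using this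
      simpa using h8.const_mul (2 / (beta - 1))
  have hH0 : H 0 = 0 := by simp [hH]
  have hFTC := integral_Ioi_of_hasDerivAt_of_tendsto hcont hderiv (hint1.add hint2) htop
  rw [hH0, sub_zero] at hFTC
  have hsplit := integral_add hint1 hint2
  rw [hsplit] at hFTC
  rw [MeasureTheory.integral_const_mul] at hFTC
  have hne : (1:ℂ) - (beta:ℂ) ≠ 0 := by
    intro h; exact hβ1' (by linear_combination -h)
  have hne2 : (beta:ℂ) - 1 ≠ 0 := by
    intro h; exact hβ1' (by linear_combination h)
  have hdiv : z / ((beta:ℂ) - 1) = -(z / (1 - (beta:ℂ))) := by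
    field_simp
    ring
  rw [hdiv]
  linear_combination hFTC

end Stmt5Aux

namespace Stmt5Aux

/-- first IBP: ∫ t^{-1-β}(e^{-zt}-1+zt) = z/β ∫ t^{-β}(1-e^{-zt}) -/
lemma ibp1 {beta : ℝ} (hβ1 : 1 < beta) (hβ2 : beta < 2) {z : ℂ} (hz : 0 < z.re) :
    ∫ t in Set.Ioi (0:ℝ), ((t ^ (-1 - beta) : ℝ) : ℂ) * (Complex.exp (-z * t) - 1 + z * t)
      = z / (beta:ℂ)
        * ∫ t in Set.Ioi (0:ℝ), ((t ^ (-beta) : ℝ) : ℂ) * (1 - Complex.exp (-z * t)) := by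
  set δ : ℝ := min 1 (1 / (‖z‖ + 1)) with hδdef
  have habs : (0:ℝ) ≤ ‖z‖ := norm_nonneg z
  have hδ : 0 < δ := lt_min one_pos (by positivity)
  have hβ0 : (beta:ℂ) ≠ 0 := by
    intro h
    have := Complex.ofReal_injective (h.trans (by norm_num) : (beta:ℂ) = ((0:ℝ):ℂ))
    linarith
  set H : ℝ → ℂ :=
    fun t => ((t ^ (-beta) : ℝ) : ℂ) * (Complex.exp (-z * t) - 1 + z * t) / (-(beta:ℂ)) with hH
  set f' : ℝ → ℂ :=
    fun t => ((t ^ (-1 - beta) : ℝ) : ℂ) * (Complex.exp (-z * t) - 1 + z * t)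
      + z / (-(beta:ℂ)) * (((t ^ (-beta) : ℝ) : ℂ) * (1 - Complex.exp (-z * t))) with hf'
  have hint1 : IntegrableOn
      (fun t : ℝ => ((t ^ (-1 - beta) : ℝ) : ℂ) * (Complex.exp (-z * t) - 1 + z * t))
      (Set.Ioi 0) := I3 hβ1 hβ2 hz
  have hint2 : IntegrableOn
      (fun t : ℝ => z / (-(beta:ℂ)) * (((t ^ (-beta) : ℝ) : ℂ) * (1 - Complex.exp (-z * t))))
      (Set.Ioi 0) := (I2 hβ1 hβ2 hz).const_mul _
  have hderiv : ∀ t ∈ Set.Ioi (0:ℝ), HasDerivAt H (f' t) t := by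
    intro t ht
    have ht0 : (0:ℝ) < t := ht
    have h1 := hasDerivAt_rpow_ofReal (p := -beta) ht0.ne'
    have h2 : HasDerivAt (fun t : ℝ => Complex.exp (-z * t) - 1 + z * t)
        (Complex.exp (-z * t) * (-z * 1) + z * 1) t :=
      ((hasDerivAt_exp_neg z t).sub_const 1).add
        (((hasDerivAt_id t).ofReal_comp).const_mul z)
    have h3 := (h1.mul h2).div_const (-(beta:ℂ))
    convert h3 using 1
    · rfl
    · rfl
    rw [hf', show (-beta - 1 : ℝ) = -1 - beta by ring]
    push_cast
    field_simp [hβ0]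
    ring
  have hnormH : ∀ t : ℝ, 0 < t →
      ‖H t‖ = t ^ (-beta) * ‖Complex.exp (-z * t) - 1 + z * t‖ / beta := by
    intro t h
    rw [hH]
    simp only [norm_div, norm_mul, Complex.norm_real, Real.norm_eq_abs]
    rw [_root_.abs_of_nonneg (Real.rpow_nonneg h.le _),
      show (-(beta:ℂ)) = ((-beta : ℝ) : ℂ) by push_cast; ring,
      Complex.norm_real, Real.norm_eq_abs, abs_of_neg (by linarith : -beta < 0), neg_neg]
  have hcont : ContinuousWithinAt H (Set.Ici 0) 0 := by
    have hH0 : H 0 = 0 := by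
      simp [hH, Real.zero_rpow (by intro hc; linarith : -beta ≠ 0)]
    rw [ContinuousWithinAt, hH0]
    refine squeeze_zero_norm'
      (a := fun t => ‖z‖ ^ 2 / beta * t ^ (2 - beta)) ?_ ?_
    · filter_upwards [Ico_mem_nhdsGE_of_mem (by exact ⟨le_rfl, hδ⟩ :
        (0:ℝ) ∈ Set.Ico 0 δ)] with t ht
      obtain ⟨ht0, htδ⟩ := ht
      rcases eq_or_lt_of_le ht0 with h | h
      · rw [← h]
        simp [hH, Real.zero_rpow (by intro hc; linarith : (2:ℝ) - beta ≠ 0),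
          Real.zero_rpow (by intro hc; linarith : -beta ≠ 0)]
      · have hzt : ‖-z * t‖ ≤ 1 := by
          rw [abs_neg_z_t z h.le]
          have h1 : ‖z‖ * t ≤ ‖z‖ * (1 / (‖z‖ + 1)) :=
            mul_le_mul_of_nonneg_left (htδ.le.trans (min_le_right _ _)) habs
          have h2 : ‖z‖ * (1 / (‖z‖ + 1)) ≤ 1 := by
            rw [mul_one_div, div_le_one (by positivity)]; linarith
          linarith
        have hb : ‖Complex.exp (-z * t) - 1 + z * t‖ ≤ (‖z‖ * t) ^ 2 := by
          have h3 : (Complex.exp (-z * ↑t) - 1 + z * ↑t)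
              = Complex.exp (-z * ↑t) - 1 - (-z * ↑t) := by ring
          rw [h3, ← abs_neg_z_t z h.le]
          exact Complex.norm_exp_sub_one_sub_id_le hzt
        rw [hnormH t h]
        refine (div_le_div_aux (mul_le_mul_of_nonneg_left hb
          (Real.rpow_nonneg h.le _)) (by linarith)).trans_eq ?_
        rw [show (2 - beta : ℝ) = -beta + 2 by ring, Real.rpow_add h, Real.rpow_two]
        ring
    · have hca : ContinuousAt (fun t : ℝ => t ^ (2 - beta)) 0 :=
        Real.continuousAt_rpow_const 0 _ (Or.inr (by linarith))
      have h7 : Tendsto (fun t : ℝ => t ^ (2 - beta)) (nhdsWithin 0 (Set.Ici 0)) (nhds 0) := by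
        have := hca.tendsto.mono_left (nhdsWithin_le_nhds (s := Set.Ici 0))
        rwa [Real.zero_rpow (by intro hc; linarith : (2:ℝ) - beta ≠ 0)] at this
      simpa using h7.const_mul (‖z‖ ^ 2 / beta)
  have htop : Tendsto H atTop (nhds 0) := by
    refine squeeze_zero_norm' (a := fun t => (2 + ‖z‖) / beta * t ^ (1 - beta)) ?_ ?_
    · filter_upwards [eventually_ge_atTop (1:ℝ)] with t ht1
      have h : (0:ℝ) < t := lt_of_lt_of_le one_pos ht1
      have hb : ‖Complex.exp (-z * t) - 1 + z * t‖ ≤ 2 + ‖z‖ * t := by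
        calc ‖Complex.exp (-z * t) - 1 + z * t‖
            ≤ ‖Complex.exp (-z * t) - 1‖ + ‖z * (t:ℂ)‖ := norm_add_le _ _
          _ ≤ 2 + ‖z‖ * t := by
              refine add_le_add ?_ ?_
              · rw [← norm_sub_rev]; exact norm_one_sub_exp_le_two hz h
              · rw [norm_mul, Complex.norm_real, Real.norm_eq_abs,
                  _root_.abs_of_nonneg h.le]
      rw [hnormH t h]
      refine (div_le_div_aux (mul_le_mul_of_nonneg_left hb
        (Real.rpow_nonneg h.le _)) (by linarith)).trans ?_
      have hkey : t ^ (-beta) * (2 + ‖z‖ * t)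
          ≤ (2 + ‖z‖) * t ^ (1 - beta) := by
        have e1 : t ^ (-beta) ≤ t ^ (1 - beta) :=
          Real.rpow_le_rpow_of_exponent_le ht1 (by linarith)
        have e2 : t ^ (-beta) * t = t ^ (1 - beta) := by
          rw [show (1 - beta : ℝ) = -beta + 1 by ring, Real.rpow_add h, Real.rpow_one]
        have e3 : (0:ℝ) ≤ t ^ (-beta) := Real.rpow_nonneg h.le _
        nlinarith [Real.rpow_nonneg h.le (1 - beta)]
      exact div_le_div_aux hkey (by linarith) |>.trans_eq (by ring)
    · have h8 : Tendsto (fun t : ℝ => t ^ (1 - beta)) atTop (nhds 0) := by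
        have := tendsto_rpow_neg_atTop (by linarith : (0:ℝ) < beta - 1)
        simpa [show -(beta - 1) = 1 - beta by ring] using this
      simpa using h8.const_mul ((2 + ‖z‖) / beta)
  have hH0 : H 0 = 0 := by
    simp [hH, Real.zero_rpow (by intro hc; linarith : -beta ≠ 0)]
  have hFTC := integral_Ioi_of_hasDerivAt_of_tendsto hcont hderiv (hint1.add hint2) htop
  rw [hH0, sub_zero] at hFTC
  rw [integral_add hint1 hint2, MeasureTheory.integral_const_mul] at hFTC
  have hdiv : z / (beta:ℂ) = -(z / (-(beta:ℂ))) := by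
    field_simp
  rw [hdiv]
  linear_combination hFTC

end Stmt5Aux

namespace Stmt5Aux

lemma keyB {beta : ℝ} (hβ1 : 1 < beta) (hβ2 : beta < 2) {z : ℂ} (hz : 0 < z.re) :
    ∫ t in Set.Ioi (0:ℝ), ((t ^ (-beta) : ℝ) : ℂ) * (1 - Complex.exp (-z * t))
      = Complex.Gamma (((2 - beta : ℝ)):ℂ) / ((beta:ℂ) - 1) * z ^ ((beta:ℂ) - 1) := by
  have hzne : z ≠ 0 := by intro h; rw [h] at hz; simp at hz
  have hbase := base (s := 2 - beta) (by linarith) hz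
  have hcong : (∫ t in Set.Ioi (0:ℝ), ((t ^ (2 - beta - 1) : ℝ) : ℂ) * Complex.exp (-z * t))
      = ∫ t in Set.Ioi (0:ℝ), ((t ^ (1 - beta) : ℝ) : ℂ) * Complex.exp (-z * t) := by
    simp only [show (2 - beta - 1 : ℝ) = 1 - beta by ring]
  rw [hcong] at hbase
  rw [ibp2 hβ1 hβ2 hz, hbase]
  have hpow : z ^ ((beta:ℂ) - 1) = z * z ^ (-(((2 - beta : ℝ)):ℂ)) := by
    have h : ((beta:ℂ) - 1) = 1 + (-(((2 - beta : ℝ)):ℂ)) := by push_cast; ring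
    rw [h, Complex.cpow_add _ _ hzne, Complex.cpow_one]
  rw [hpow]; ring

lemma keyA {beta : ℝ} (hβ1 : 1 < beta) (hβ2 : beta < 2) {z : ℂ} (hz : 0 < z.re) :
    ∫ t in Set.Ioi (0:ℝ), ((t ^ (-1 - beta) : ℝ) : ℂ) * (Complex.exp (-z * t) - 1 + z * t)
      = Complex.Gamma (((2 - beta : ℝ)):ℂ) / ((beta:ℂ) * ((beta:ℂ) - 1)) * z ^ (beta:ℂ) := by
  have hzne : z ≠ 0 := by intro h; rw [h] at hz; simp at hz
  rw [ibp1 hβ1 hβ2 hz, keyB hβ1 hβ2 hz]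
  have hpow : z ^ (beta:ℂ) = z * z ^ ((beta:ℂ) - 1) := by
    conv_lhs => rw [show (beta:ℂ) = 1 + ((beta:ℂ) - 1) by ring]
    rw [Complex.cpow_add _ _ hzne, Complex.cpow_one]
  have hb0 : (beta:ℂ) ≠ 0 := by
    intro h
    have := Complex.ofReal_injective (h.trans (by norm_num) : (beta:ℂ) = ((0:ℝ):ℂ))
    linarith
  have hb1 : (beta:ℂ) - 1 ≠ 0 := by
    intro h
    have : (beta:ℂ) = ((1:ℝ):ℂ) := by push_cast; linear_combination h
    have := Complex.ofReal_injective this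
    linarith
  rw [hpow]; field_simp

end Stmt5Aux

namespace Stmt5Aux

lemma im_w_pow {lam a beta : ℝ} (hlam : 0 < lam) :
    ((((lam:ℂ) - (a:ℂ) * Complex.I)) ^ (beta:ℂ)).im
      = -((lam^2 + a^2) ^ (beta/2) * Real.sin (beta * Real.arctan (a/lam))) := by
  set w : ℂ := (lam:ℂ) - (a:ℂ) * Complex.I with hw
  have hwre : w.re = lam := by simp [hw]
  have hwim : w.im = -a := by simp [hw]
  have hwne : w ≠ 0 := by
    intro h; rw [h] at hwre; simp at hwre; linarith [hwre.symm]
  have hsq : (0:ℝ) < lam^2 + a^2 := by nlinarith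
  have habs : ‖w‖ = (lam^2 + a^2) ^ ((1:ℝ)/2) := by
    rw [Complex.norm_def, Complex.normSq_apply, hwre, hwim, ← Real.sqrt_eq_rpow]
    congr 1; ring
  have harg : w.arg = -Real.arctan (a / lam) := by
    have h1 : |w.arg| < π/2 :=
      Complex.abs_arg_lt_pi_div_two_iff.2 (Or.inl (by rw [hwre]; exact hlam))
    have h2 := abs_lt.mp h1
    have h3 : Real.tan w.arg = -(a/lam) := by rw [Complex.tan_arg, hwre, hwim]; ring
    rw [← Real.arctan_tan h2.1 h2.2, h3, Real.arctan_neg]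
  rw [Complex.cpow_def_of_ne_zero hwne, Complex.exp_im]
  have hre : (Complex.log w * (beta:ℂ)).re = Real.log (‖w‖) * beta := by
    simp [Complex.mul_re, Complex.log_re, Complex.log_im]
  have him : (Complex.log w * (beta:ℂ)).im = w.arg * beta := by
    simp [Complex.mul_im, Complex.log_im]
  rw [hre, him, harg]
  have hexp : Real.exp (Real.log (‖w‖) * beta) = (lam^2 + a^2) ^ (beta/2) := by
    rw [habs, Real.log_rpow hsq, Real.rpow_def_of_pos hsq]
    congr 1; ring
  rw [hexp, show -Real.arctan (a/lam) * beta = -(beta * Real.arctan (a/lam)) by ring,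
    Real.sin_neg]
  ring

end Stmt5Aux

open Stmt5Aux in
/-- For `λ > 0`, `β ∈ (1,2)` and `η = arctan(a/λ)`:
`∫₀^∞ r^{-1-β} e^{-λr}(sin(ar) - ar) dr = -Γ(-β)(λ²+a²)^{β/2} sin(βη) - Γ(1-β)λ^{β-1} a`. -/
theorem stmt_5 (lam beta a : ℝ) (hlam : 0 < lam) (hβ : beta ∈ Set.Ioo (1:ℝ) 2) :
    ∫ r in Set.Ioi (0:ℝ), r ^ (-1 - beta) * Real.exp (-lam * r) * (Real.sin (a * r) - a * r)
      = -Real.Gamma (-beta) * (lam ^ 2 + a ^ 2) ^ (beta / 2)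
          * Real.sin (beta * Real.arctan (a / lam))
        - Real.Gamma (1 - beta) * lam ^ (beta - 1) * a := by
  obtain ⟨hβ1, hβ2⟩ := hβ
  set w : ℂ := (lam:ℂ) - (a:ℂ) * Complex.I with hw
  have hwre : 0 < w.re := by simpa [hw] using hlam
  have hlre : 0 < ((lam:ℂ)).re := by simpa using hlam
  set g : ℝ → ℂ := fun t =>
    (((t ^ (-1 - beta) : ℝ)) : ℂ) * (Complex.exp (-w * t) - 1 + w * t)
      - (((t ^ (-1 - beta) : ℝ)) : ℂ)
          * (Complex.exp (-(lam:ℂ) * t) - 1 + (lam:ℂ) * t)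
      + (a:ℂ) * Complex.I
          * ((((t ^ (-beta) : ℝ)) : ℂ) * (1 - Complex.exp (-(lam:ℂ) * t))) with hg
  have hi1 := I3 hβ1 hβ2 hwre
  have hi2 := I3 hβ1 hβ2 hlre
  have hi3 : IntegrableOn (fun t : ℝ => (a:ℂ) * Complex.I
      * ((((t ^ (-beta) : ℝ)) : ℂ) * (1 - Complex.exp (-(lam:ℂ) * t)))) (Set.Ioi 0) :=
    (I2 hβ1 hβ2 hlre).const_mul _
  have hgint : IntegrableOn g (Set.Ioi 0) := (hi1.sub hi2).add hi3
  have him : ∀ t : ℝ, 0 < t →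
      (g t).im = t ^ (-1 - beta) * Real.exp (-lam * t) * (Real.sin (a * t) - a * t) := by
    intro t ht
    have hQ : ((t ^ (-beta) : ℝ) : ℂ) = ((t ^ (-1 - beta) : ℝ) : ℂ) * (t:ℂ) := by
      rw [show (-beta : ℝ) = (-1 - beta) + 1 by ring, Real.rpow_add ht, Real.rpow_one]
      push_cast; ring
    have hE : Complex.exp (-w * t)
        = ((Real.exp (-lam * t) : ℝ) : ℂ) * Complex.exp (((a * t : ℝ) : ℂ) * Complex.I) := by
      rw [Complex.ofReal_exp, ← Complex.exp_add]
      congr 1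
      rw [hw]; push_cast; ring
    have hL : Complex.exp (-(lam:ℂ) * t) = ((Real.exp (-lam * t) : ℝ) : ℂ) := by
      rw [Complex.ofReal_exp]; congr 1; push_cast; ring
    have hgeq : g t = ((t ^ (-1 - beta) * Real.exp (-lam * t) : ℝ) : ℂ)
        * (Complex.exp (((a * t : ℝ) : ℂ) * Complex.I) - 1 - ((a * t : ℝ) : ℂ) * Complex.I) := by
      simp only [hg]
      rw [hQ, hE, hL, hw]
      push_cast
      ring
    rw [hgeq]
    have hζ : (Complex.exp (((a*t:ℝ):ℂ) * Complex.I) - 1 - ((a*t:ℝ):ℂ) * Complex.I).im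
        = Real.sin (a*t) - a*t := by
      rw [Complex.sub_im, Complex.sub_im, Complex.exp_ofReal_mul_I_im]
      simp
    rw [Complex.mul_im, Complex.ofReal_im, Complex.ofReal_re, hζ]
    ring
  have hstep1 : ∫ r in Set.Ioi (0:ℝ),
        r ^ (-1 - beta) * Real.exp (-lam * r) * (Real.sin (a * r) - a * r)
      = ∫ t in Set.Ioi (0:ℝ), (g t).im :=
    setIntegral_congr_fun measurableSet_Ioi (fun t ht => (him t ht).symm)
  rw [hstep1]
  have hstep2 : ∫ t in Set.Ioi (0:ℝ), (g t).im = (∫ t in Set.Ioi (0:ℝ), g t).im := by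
    simp only [← RCLike.im_eq_complex_im]
    exact integral_im hgint
  rw [hstep2]
  have hsplit : ∫ t in Set.Ioi (0:ℝ), g t
      = (∫ t in Set.Ioi (0:ℝ),
            ((t ^ (-1 - beta) : ℝ) : ℂ) * (Complex.exp (-w * t) - 1 + w * t))
        - (∫ t in Set.Ioi (0:ℝ),
            ((t ^ (-1 - beta) : ℝ) : ℂ) * (Complex.exp (-(lam:ℂ) * t) - 1 + (lam:ℂ) * t))
        + (a:ℂ) * Complex.I
          * ∫ t in Set.Ioi (0:ℝ),
              ((t ^ (-beta) : ℝ) : ℂ) * (1 - Complex.exp (-(lam:ℂ) * t)) := by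
    have hi12 : IntegrableOn (fun t : ℝ =>
        ((t ^ (-1 - beta) : ℝ) : ℂ) * (Complex.exp (-w * t) - 1 + w * t)
          - ((t ^ (-1 - beta) : ℝ) : ℂ)
              * (Complex.exp (-(lam:ℂ) * t) - 1 + (lam:ℂ) * t)) (Set.Ioi 0) := hi1.sub hi2
    simp only [hg]
    rw [integral_add hi12 hi3, integral_sub hi1 hi2, MeasureTheory.integral_const_mul]
  rw [hsplit, keyA hβ1 hβ2 hwre, keyA hβ1 hβ2 hlre, keyB hβ1 hβ2 hlre,
    Complex.Gamma_ofReal]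
  have hl1 : ((lam:ℂ)) ^ ((beta:ℂ)) = ((lam ^ beta : ℝ) : ℂ) :=
    (Complex.ofReal_cpow hlam.le beta).symm
  have hl2 : ((lam:ℂ)) ^ ((beta:ℂ) - 1) = ((lam ^ (beta - 1) : ℝ) : ℂ) := by
    rw [show ((beta:ℂ) - 1) = (((beta - 1 : ℝ)):ℂ) by push_cast; ring]
    exact (Complex.ofReal_cpow hlam.le _).symm
  rw [hl1, hl2]
  have hc1 : ((Real.Gamma (2 - beta) : ℝ) : ℂ) / ((beta:ℂ) * ((beta:ℂ) - 1))
      = ((Real.Gamma (2 - beta) / (beta * (beta - 1)) : ℝ) : ℂ) := by push_cast; ring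
  have hc2 : ((Real.Gamma (2 - beta) : ℝ) : ℂ) / ((beta:ℂ) - 1)
      = ((Real.Gamma (2 - beta) / (beta - 1) : ℝ) : ℂ) := by push_cast; ring
  rw [hc1, hc2]
  have him2 : ∀ (r1 r2 p q : ℝ) (M : ℂ),
      ((r1:ℂ) * M - (r1:ℂ) * (p:ℂ) + (a:ℂ) * Complex.I * ((r2:ℂ) * (q:ℂ))).im
        = r1 * M.im + a * (r2 * q) := by
    intro r1 r2 p q M
    simp [Complex.add_im, Complex.sub_im, Complex.mul_im, Complex.mul_re]
  rw [him2, hw, im_w_pow hlam]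
  have hg1 : Real.Gamma (1 - beta) = -beta * Real.Gamma (-beta) := by
    have h := Real.Gamma_add_one (s := -beta) (by intro hc; linarith : -beta ≠ 0)
    rw [show (1 - beta : ℝ) = -beta + 1 by ring, h]
  have hg2 : Real.Gamma (2 - beta) = (1 - beta) * Real.Gamma (1 - beta) := by
    have h := Real.Gamma_add_one (s := 1 - beta) (by intro hc; linarith : (1:ℝ) - beta ≠ 0)
    rw [show (2 - beta : ℝ) = (1 - beta) + 1 by ring, h]
  rw [hg2, hg1]
  have hb0 : beta ≠ 0 := by intro hc; linarith
  have hb1 : beta - 1 ≠ 0 := by intro hc; linarith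
  field_simp
  ring
end
end

section
/- Let β ∈ (0,1), λ > 0, and a ∈ ℝ. Then Re[(λ - ia)^β] - λ^β ≥ 0 with equality iff a = 0, where (λ - ia)^β is the principal branch power. -/
open Complex Real

lemma key_ineq (beta θ : ℝ) (hβ0 : 0 < beta) (hβ1 : beta < 1)
    (hθ0 : 0 < θ) (hθ : θ < π/2) :
    Real.cos θ ^ beta < Real.cos (beta * θ) := by
  set f : ℝ → ℝ := fun t => Real.cos (beta * t) - Real.cos t ^ beta with hf
  have hmono : StrictMonoOn f (Set.Icc 0 θ) := by
    apply strictMonoOn_of_deriv_pos (convex_Icc 0 θ)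
    · apply ContinuousOn.sub
      · exact (Real.continuous_cos.comp (continuous_const.mul continuous_id)).continuousOn
      · exact (Real.continuous_cos.rpow_const (fun x => Or.inr hβ0.le)).continuousOn
    · intro t ht
      rw [interior_Icc] at ht
      obtain ⟨ht0, htθ⟩ := ht
      have htlt : t < π/2 := htθ.trans hθ
      have hcost : 0 < Real.cos t := Real.cos_pos_of_mem_Ioo ⟨by linarith [Real.pi_pos], htlt⟩
      have h1 : HasDerivAt (fun t => Real.cos (beta * t)) (-Real.sin (beta * t) * beta) t := by
        have := (Real.hasDerivAt_cos (beta * t)).comp t ((hasDerivAt_id t).const_mul beta)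
        simpa [Function.comp_def] using this
      have h2 : HasDerivAt (fun t => Real.cos t ^ beta)
          (-Real.sin t * beta * Real.cos t ^ (beta - 1)) t :=
        (Real.hasDerivAt_cos t).rpow_const (Or.inl hcost.ne')
      have hd : HasDerivAt f (-Real.sin (beta * t) * beta - -Real.sin t * beta * Real.cos t ^ (beta - 1)) t :=
        h1.sub h2
      rw [hd.deriv]
      have hsin : Real.sin (beta * t) < Real.sin t := by
        apply Real.strictMonoOn_sin ⟨by nlinarith [Real.pi_pos], le_of_lt (by nlinarith)⟩
          ⟨by linarith [Real.pi_pos], htlt.le⟩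
        nlinarith
      have hge1 : 1 ≤ Real.cos t ^ (beta - 1) :=
        Real.one_le_rpow_of_pos_of_le_one_of_nonpos hcost (Real.cos_le_one t) (by linarith)
      have hsint : 0 < Real.sin t := Real.sin_pos_of_pos_of_lt_pi ht0 (by linarith [Real.pi_pos, Real.pi_le_four])
      nlinarith [mul_le_mul_of_nonneg_left hge1 hsint.le]
  have h0 : f 0 = 0 := by simp [hf]
  have := hmono (Set.left_mem_Icc.2 hθ0.le) (Set.right_mem_Icc.2 hθ0.le) hθ0
  rw [h0] at this
  simpa [hf] using this

/-- For `β ∈ (0,1)`, `λ > 0`, `a ∈ ℝ`, the principal-branch power satisfies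
`Re[(λ - ia)^β] - λ^β ≥ 0`, with equality iff `a = 0`. -/
theorem stmt_8 (lam beta a : ℝ) (hlam : 0 < lam) (hβ : beta ∈ Set.Ioo (0:ℝ) 1) :
    0 ≤ (((lam : ℂ) - Complex.I * (a : ℂ)) ^ (beta : ℂ)).re - lam ^ beta
    ∧ ((((lam : ℂ) - Complex.I * (a : ℂ)) ^ (beta : ℂ)).re - lam ^ beta = 0 ↔ a = 0) := by
  obtain ⟨hβ0, hβ1⟩ := hβ
  set z : ℂ := (lam : ℂ) - Complex.I * (a : ℂ) with hz
  have hre : z.re = lam := by simp [hz]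
  have him : z.im = -a := by simp [hz]
  have hzne : z ≠ 0 := fun h => by simp [h] at hre; linarith
  by_cases ha : a = 0
  · subst ha
    have : z = (lam : ℂ) := by simp [hz]
    rw [this, ← Complex.ofReal_cpow hlam.le]
    simp
  · -- strict case
    have habs : 0 < ‖z‖ := norm_pos_iff.mpr hzne
    have hargne : Complex.arg z ≠ 0 := by
      intro h
      rw [Complex.arg_eq_zero_iff] at h
      exact ha (by simpa [him] using (neg_eq_zero.mp (h.2 ▸ him ▸ rfl)))
    have hargabs : |Complex.arg z| < π/2 :=
      Complex.abs_arg_lt_pi_div_two_iff.2 (Or.inl (by rw [hre]; exact hlam))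
    -- compute re (z ^ β)
    have hrepow : (z ^ (beta : ℂ)).re = ‖z‖ ^ beta * Real.cos (beta * Complex.arg z) := by
      rw [Complex.cpow_def_of_ne_zero hzne, Complex.exp_re]
      have h1 : (Complex.log z * (beta : ℂ)).re = Real.log (‖z‖) * beta := by
        simp [Complex.mul_re, Complex.log_re, Complex.log_im]
      have h2 : (Complex.log z * (beta : ℂ)).im = Complex.arg z * beta := by
        simp [Complex.mul_im, Complex.log_re, Complex.log_im]
      rw [h1, h2, Real.rpow_def_of_pos habs, mul_comm beta]
    have hcosarg : 0 < Real.cos (Complex.arg z) := by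
      apply Real.cos_pos_of_mem_Ioo
      constructor
      · linarith [abs_lt.mp hargabs]
      · linarith [abs_lt.mp hargabs]
    have hlameq : lam = ‖z‖ * Real.cos (Complex.arg z) := by
      have := Complex.cos_arg hzne
      rw [hre] at this
      field_simp at this
      linarith [this]
    have hkey : Real.cos (Complex.arg z) ^ beta < Real.cos (beta * Complex.arg z) := by
      have habsarg0 : 0 < |Complex.arg z| := abs_pos.2 hargne
      have := key_ineq beta |Complex.arg z| hβ0 hβ1 habsarg0 hargabs
      rw [Real.cos_abs, ← abs_of_pos hβ0, ← abs_mul, Real.cos_abs] at this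
      rwa [abs_of_pos hβ0] at this
    have hlt : lam ^ beta < (z ^ (beta : ℂ)).re := by
      rw [hrepow, hlameq, Real.mul_rpow habs.le hcosarg.le]
      exact mul_lt_mul_of_pos_left hkey (Real.rpow_pos_of_pos habs beta)
    constructor
    · linarith
    · constructor
      · intro h; linarith
      · intro h; exact absurd h ha
end
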